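/- arXiv:2604.00740 — 5 statements merged into one kernel-verified Lean document; each statement's English description precedes it below -/
import Mathlib

section
/- Let α ≠ 0, m ∈ ℝ with m ≠ n (or m = ∞), and f(x) = −α log|x| on ℝⁿ \ {0}. The tensor Ric_f^m = D²f − (df⊗df)/(m−n) (with the last term zero if m = ∞) is positive semidefinite at every x ≠ 0 if and only if α < 0 and n + α ≤ m ≤ n. -/
lemma key (n : ℕ) (K C h : ℝ) (x v : Fin n → ℝ) :
    ∑ i : Fin n, ∑ j : Fin n, v i * (K * ((if i = j then (1:ℝ) else 0) + C * x i * x j / h)) * v j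
      = K * ((∑ i, v i * v i) + C / h * (∑ i, x i * v i)^2) := by
  have e : ∀ i j : Fin n, v i * (K * ((if i = j then (1:ℝ) else 0) + C * x i * x j / h)) * v j
      = (if i = j then K * (v i * v j) else 0) + (C / h * K) * ((x i * v i) * (x j * v j)) := by
    intro i j; split <;> ring
  simp only [e, Finset.sum_add_distrib, Finset.sum_ite_eq, Finset.mem_univ, if_true,
    ← Finset.mul_sum, ← Finset.sum_mul, ← Finset.mul_sum]
  ring

/-- For `f(x) = −α log|x|` on `ℝⁿ \ {0}` (`α ≠ 0`) and `m ∈ ℝ ∪ {∞}` with `m ≠ n`,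
the tensor `Ric_f^m = D²f − (df⊗df)/(m−n)` (last term zero when `m = ∞`), whose entries are
`−(α/|x|²)(δ_{ij} + (α/(m−n) − 2) x_i x_j/|x|²)`, is positive semidefinite at every `x ≠ 0`
if and only if `α < 0` and `n + α ≤ m ≤ n`. -/
theorem stmt3 (n : ℕ) (hn : 2 ≤ n) (α : ℝ) (hα : α ≠ 0)
    (m : EReal) (hm : m ≠ ((n : ℝ) : EReal)) (hm' : m ≠ ⊥) :
    (∀ x : EuclideanSpace ℝ (Fin n), x ≠ 0 → ∀ v : EuclideanSpace ℝ (Fin n),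
      0 ≤ ∑ i : Fin n, ∑ j : Fin n,
        v i * (-(α / ‖x‖ ^ 2) *
          ((if i = j then (1:ℝ) else 0) +
            ((if m = ⊤ then (0:ℝ) else α / (m.toReal - (n : ℝ))) - 2) *
              x i * x j / ‖x‖ ^ 2)) * v j)
    ↔ (α < 0 ∧ ((n : ℝ) : EReal) + ((α : ℝ) : EReal) ≤ m ∧ m ≤ ((n : ℝ) : EReal)) := by
  set c : ℝ := if m = ⊤ then (0:ℝ) else α / (m.toReal - (n : ℝ)) with hc
  constructor
  · intro H
    have h01 : (0:ℕ) < n := by omega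
    have h11 : (1:ℕ) < n := by omega
    set i0 : Fin n := ⟨0, h01⟩ with hi0
    set i1 : Fin n := ⟨1, h11⟩ with hi1
    have hne : i0 ≠ i1 := by simp [hi0, hi1, Fin.ext_iff]
    set x : EuclideanSpace ℝ (Fin n) := EuclideanSpace.single i0 1 with hx
    have hxnorm : ‖x‖ = 1 := by rw [hx, EuclideanSpace.norm_single]; norm_num
    have hxne : x ≠ 0 := by
      intro h; rw [h, norm_zero] at hxnorm; norm_num at hxnorm
    have hxsq : ‖x‖ ^ 2 = 1 := by rw [hxnorm]; norm_num
    have Sxx : ∑ i, x i * x i = 1 := by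
      simp [hx, EuclideanSpace.single_apply, mul_ite, ite_mul, Finset.sum_ite_eq]
    -- first test vector : orthogonal direction
    have hαneg : α < 0 := by
      have h1 := H x hxne (EuclideanSpace.single i1 1)
      rw [key n (-(α / ‖x‖ ^ 2)) (c - 2) (‖x‖ ^ 2) x (EuclideanSpace.single i1 1)] at h1
      have Svv : ∑ i, (EuclideanSpace.single i1 (1:ℝ) : EuclideanSpace ℝ (Fin n)) i *
          (EuclideanSpace.single i1 (1:ℝ) : EuclideanSpace ℝ (Fin n)) i = 1 := by
        simp [EuclideanSpace.single_apply, mul_ite, ite_mul, Finset.sum_ite_eq]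
      have Sxv : ∑ i, x i * (EuclideanSpace.single i1 (1:ℝ) : EuclideanSpace ℝ (Fin n)) i = 0 := by
        simp [hx, EuclideanSpace.single_apply, mul_ite, ite_mul, Finset.sum_ite_eq, hne, hne.symm]
      rw [Svv, Sxv, hxsq] at h1
      simp at h1
      rcases lt_or_gt_of_ne hα with h | h
      · exact h
      · linarith
    -- second test vector : x itself
    have hc1 : 1 ≤ c := by
      have h1 := H x hxne x
      rw [key n (-(α / ‖x‖ ^ 2)) (c - 2) (‖x‖ ^ 2) x x] at h1
      rw [Sxx, hxsq] at h1
      simp at h1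
      nlinarith
    have hmt : m ≠ ⊤ := by
      intro h
      rw [hc, if_pos h] at hc1
      norm_num at hc1
    set r : ℝ := m.toReal with hr
    have hmr : (r : EReal) = m := EReal.coe_toReal hmt hm'
    have hcval : c = α / (r - n) := by rw [hc, if_neg hmt]
    have hrn : r ≠ (n : ℝ) := by
      intro h
      exact hm (by rw [← hmr, h])
    have hd : r - (n : ℝ) < 0 := by
      rcases lt_trichotomy (r - (n:ℝ)) 0 with h | h | h
      · exact h
      · exact absurd (by linarith : r = (n:ℝ)) hrn
      · exfalso
        have : α / (r - n) < 0 := div_neg_of_neg_of_pos hαneg h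
        rw [← hcval] at this; linarith
    have hαd : α ≤ r - n := by
      rw [hcval] at hc1
      exact (one_le_div_of_neg hd).mp hc1
    refine ⟨hαneg, ?_, ?_⟩
    · rw [← hmr, ← EReal.coe_add, EReal.coe_le_coe_iff]; linarith
    · rw [← hmr, EReal.coe_le_coe_iff]; linarith
  · rintro ⟨hα0, hml, hmu⟩
    have hmt : m ≠ ⊤ := by
      intro h; rw [h] at hmu
      exact EReal.coe_ne_top _ (top_le_iff.mp hmu)
    set r : ℝ := m.toReal with hr
    have hmr : (r : EReal) = m := EReal.coe_toReal hmt hm'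
    rw [← hmr, EReal.coe_le_coe_iff] at hmu
    rw [← hmr, ← EReal.coe_add, EReal.coe_le_coe_iff] at hml
    have hrn : r ≠ (n : ℝ) := fun h => hm (by rw [← hmr, h])
    have hd : r - (n : ℝ) < 0 := by
      rcases lt_or_eq_of_le hmu with h | h
      · linarith
      · exact absurd h hrn
    have hcval : c = α / (r - n) := by rw [hc, if_neg hmt]
    have hc1 : 1 ≤ c := by
      rw [hcval]
      exact (one_le_div_of_neg hd).mpr (by linarith)
    intro x hx v
    rw [key n (-(α / ‖x‖ ^ 2)) (c - 2) (‖x‖ ^ 2) x v]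
    have hh : (0:ℝ) < ‖x‖ ^ 2 := pow_pos (norm_pos_iff.mpr hx) 2
    set h := ‖x‖ ^ 2 with hhdef
    set S := ∑ i, v i * v i with hS
    set s := ∑ i, x i * v i with hs
    have hxsum : ∑ i, x i ^ 2 = h := by
      rw [hhdef, EuclideanSpace.norm_eq, Real.sq_sqrt (by positivity)]
      simp [Real.norm_eq_abs, sq_abs]
    have hSsq : S = ∑ i, v i ^ 2 := by rw [hS]; congr 1; ext i; ring
    have CS : s ^ 2 ≤ h * S := by
      rw [hs, hSsq, ← hxsum]
      exact Finset.sum_mul_sq_le_sq_mul_sq _ _ _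
    have hK : (0:ℝ) ≤ -(α / h) := by
      rw [neg_nonneg]
      exact div_nonpos_of_nonpos_of_nonneg hα0.le hh.le
    apply mul_nonneg hK
    have e : S + (c - 2) / h * s ^ 2 = (h * S + (c - 2) * s ^ 2) / h := by
      field_simp
    rw [e]
    apply div_nonneg _ hh.le
    nlinarith [mul_nonneg (by linarith : (0:ℝ) ≤ c - 1) (sq_nonneg s), CS]
end

section
/- Let γ < 1, n ≥ 3, α ∈ ℝ, and define u(x) = (R² − d_g(x,O)²)/(2(n+α)) on Ω = {x : d_g(x,O) < R}, where d_g(x,O) = |x|^{1−γ}/(1−γ) and g = |x|^{−2γ}δ. Then u satisfies the weighted equation Δ_g u − g(∇f, ∇u) = −1 in Ω, where f(x) = −α log d_g(x,O), u = 0 on {d_g(x,O) = R}, and |∇u|_g² = d_g(x,O)²/(n+α)² (so ∂u/∂ν = −R/(n+α) on the boundary). -/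
open RealInnerProductSpace

/-- The Euclidean Laplacian: sum of second partial derivatives. -/
noncomputable def euclLap {n : ℕ} (u : EuclideanSpace ℝ (Fin n) → ℝ)
    (x : EuclideanSpace ℝ (Fin n)) : ℝ :=
  ∑ i : Fin n,
    fderiv ℝ (fun y => fderiv ℝ u y (EuclideanSpace.single i 1)) x (EuclideanSpace.single i 1)

lemma hasFDerivAt_inner_self' {n : ℕ} (x : EuclideanSpace ℝ (Fin n)) :
    HasFDerivAt (fun y : EuclideanSpace ℝ (Fin n) => (⟪y, y⟫ : ℝ)) ((2:ℝ) • innerSL ℝ x) x := by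
  have h := (hasFDerivAt_id x).inner ℝ (hasFDerivAt_id x)
  refine h.congr_fderiv ?_
  ext v
  simp [fderivInnerCLM_apply, real_inner_comm x v, two_mul]

lemma hasFDerivAt_comp_inner {n : ℕ} (G : ℝ → ℝ) (G' : ℝ) (x : EuclideanSpace ℝ (Fin n))
    (h : HasDerivAt G G' ⟪x, x⟫) :
    HasFDerivAt (fun y : EuclideanSpace ℝ (Fin n) => G ⟪y, y⟫)
      ((2 * G') • innerSL ℝ x) x := by
  have h2 := HasDerivAt.comp_hasFDerivAt
    (f := fun y : EuclideanSpace ℝ (Fin n) => (⟪y, y⟫ : ℝ)) x h (hasFDerivAt_inner_self' x)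
  refine h2.congr_fderiv ?_
  rw [smul_smul, mul_comm]

lemma gradient_of_inner {n : ℕ} (G : ℝ → ℝ) (G' : ℝ) (x : EuclideanSpace ℝ (Fin n))
    (h : HasDerivAt G G' ⟪x, x⟫) :
    gradient (fun y : EuclideanSpace ℝ (Fin n) => G ⟪y, y⟫) x = (2 * G') • x := by
  have h2 := hasFDerivAt_comp_inner G G' x h
  have h3 : HasGradientAt (fun y : EuclideanSpace ℝ (Fin n) => G ⟪y, y⟫) ((2 * G') • x) x := by
    rw [hasGradientAt_iff_hasFDerivAt]
    refine h2.congr_fderiv ?_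
    ext v
    simp [real_inner_smul_left]
  exact h3.gradient

lemma sq_rpow (a : ℝ) (ha : 0 ≤ a) (p : ℝ) : (a ^ p) ^ (2:ℕ) = (a ^ (2:ℕ)) ^ p := by
  rw [← Real.rpow_natCast (a ^ p) 2, ← Real.rpow_mul ha, ← Real.rpow_natCast a 2,
    ← Real.rpow_mul ha, mul_comm]

/-- For `γ < 1`, `n ≥ 3`, `g = |x|^{−2γ}δ` (i.e. `g = e^{2φ}δ` with `φ = −γ log|x|`),
`d_g(x,O) = |x|^{1−γ}/(1−γ)` and `u(x) = (R² − d_g(x,O)²)/(2(n+α))` on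
`Ω = {d_g(x,O) < R}`: `u` satisfies the weighted equation
`Δ_g u − g(∇f,∇u) = e^{−2φ}(Δu + (n−2)Du·Dφ − Df·Du) = −1` in `Ω`, where
`f = −α log d_g(x,O)`; `u = 0` on `{d_g(x,O) = R}`; and `|∇u|_g² = e^{−2φ}|Du|² =
d_g(x,O)²/(n+α)²`. -/
theorem stmt10 (n : ℕ) (hn : 3 ≤ n) (γ α R : ℝ) (hγ : γ < 1) (hα : (n : ℝ) + α ≠ 0)
    (d u f φ : EuclideanSpace ℝ (Fin n) → ℝ)
    (hd : d = fun y => ‖y‖ ^ (1 - γ) / (1 - γ))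
    (hu : u = fun y => (R ^ 2 - d y ^ 2) / (2 * ((n : ℝ) + α)))
    (hf : f = fun y => -α * Real.log (d y))
    (hφ : φ = fun y => -γ * Real.log ‖y‖) :
    ∀ x : EuclideanSpace ℝ (Fin n), x ≠ 0 →
      (d x < R →
        ‖x‖ ^ (2 * γ) * (euclLap u x + ((n : ℝ) - 2) * ⟪gradient u x, gradient φ x⟫)
          - ‖x‖ ^ (2 * γ) * ⟪gradient f x, gradient u x⟫ = -1) ∧
      (d x = R → u x = 0) ∧
      ‖x‖ ^ (2 * γ) * ‖gradient u x‖ ^ 2 = d x ^ 2 / ((n : ℝ) + α) ^ 2 := by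
  intro x hx
  have hq0 : (0:ℝ) < 1 - γ := by linarith
  have hne1γ : (1:ℝ) - γ ≠ 0 := ne_of_gt hq0
  set A : ℝ := R ^ 2 / (2 * ((n:ℝ) + α)) with hAdef
  set B : ℝ := 1 / ((1 - γ) ^ 2 * (2 * ((n:ℝ) + α))) with hBdef
  have hS : (0:ℝ) < (⟪x, x⟫ : ℝ) := by
    rw [real_inner_self_eq_norm_sq]
    exact pow_pos (norm_pos_iff.mpr hx) 2
  -- rewritten u
  have hu' : u = fun y : EuclideanSpace ℝ (Fin n) =>
      A - B * (⟪y, y⟫ : ℝ) ^ (1 - γ) := by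
    funext y
    simp only [hu, hd]
    have h1 : (‖y‖ ^ (1 - γ)) ^ (2:ℕ) = (⟪y, y⟫ : ℝ) ^ (1 - γ) := by
      rw [sq_rpow ‖y‖ (norm_nonneg y), ← real_inner_self_eq_norm_sq]
    rw [div_pow, ← h1, hAdef, hBdef]
    field_simp
  -- derivative of the profile
  have hGder : ∀ s : ℝ, s ≠ 0 →
      HasDerivAt (fun t : ℝ => A - B * t ^ (1 - γ))
        (-(B * ((1 - γ) * s ^ (1 - γ - 1)))) s := fun s hs =>
    HasDerivAt.const_sub A ((Real.hasDerivAt_rpow_const (Or.inl hs)).const_mul B)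
  have hufd : ∀ y : EuclideanSpace ℝ (Fin n), y ≠ 0 →
      HasFDerivAt u ((2 * -(B * ((1 - γ) * (⟪y, y⟫:ℝ) ^ (1 - γ - 1)))) • innerSL ℝ y) y := by
    intro y hy
    rw [hu']
    have hSy : (0:ℝ) < (⟪y, y⟫ : ℝ) := by
      rw [real_inner_self_eq_norm_sq]
      exact pow_pos (norm_pos_iff.mpr hy) 2
    exact hasFDerivAt_comp_inner _ _ y (hGder _ hSy.ne')
  -- gradient of u
  have hgu : gradient u x = (-(2 * B * (1 - γ) * (⟪x, x⟫:ℝ) ^ (1 - γ - 1))) • x := by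
    have h := gradient_of_inner (fun t : ℝ => A - B * t ^ (1 - γ)) _ x (hGder _ hS.ne')
    rw [hu', h]
    congr 1
    ring
  -- first derivative applied to basis vectors, near x
  have hvev : ∀ i : Fin n,
      (fun y => fderiv ℝ u y (EuclideanSpace.single i 1)) =ᶠ[nhds x]
      (fun y => (2 * -(B * ((1 - γ) * (⟪y, y⟫:ℝ) ^ (1 - γ - 1)))) * y i) := by
    intro i
    filter_upwards [eventually_ne_nhds hx] with y hy
    rw [(hufd y hy).fderiv]
    simp [EuclideanSpace.inner_single_right]
  -- second derivatives
  have hsecond : ∀ i : Fin n,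
      fderiv ℝ (fun y => fderiv ℝ u y (EuclideanSpace.single i 1)) x (EuclideanSpace.single i 1)
      = -(2 * B * (1 - γ) * (⟪x, x⟫:ℝ) ^ (1 - γ - 1))
        - 4 * B * (1 - γ) * (1 - γ - 1) * (⟪x, x⟫:ℝ) ^ (1 - γ - 1 - 1) * (x i * x i) := by
    intro i
    rw [(hvev i).fderiv_eq]
    have hrg := Real.hasDerivAt_rpow_const (x := (⟪x, x⟫:ℝ)) (p := 1 - γ - 1) (Or.inl hS.ne')
    have hG2 := (((hrg.const_mul (1 - γ)).const_mul B).neg).const_mul 2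
    have hc := hasFDerivAt_comp_inner _ _ x hG2
    have hp : HasFDerivAt (fun y : EuclideanSpace ℝ (Fin n) => (y i : ℝ))
        (EuclideanSpace.proj (𝕜 := ℝ) i) x := (EuclideanSpace.proj (𝕜 := ℝ) i).hasFDerivAt
    have hcp : HasFDerivAt (fun y : EuclideanSpace ℝ (Fin n) =>
        2 * -(B * ((1 - γ) * (⟪y, y⟫:ℝ) ^ (1 - γ - 1))) * y i) _ x := hc.mul hp
    rw [hcp.fderiv]
    simp [EuclideanSpace.inner_single_right, EuclideanSpace.single_apply]
    ring
  -- the Laplacian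
  have hsum : (⟪x, x⟫:ℝ) = ∑ i, x i * x i := by
    rw [real_inner_self_eq_norm_sq, EuclideanSpace.norm_sq_eq]
    simp only [Real.norm_eq_abs, abs_mul_abs_self, sq]
  have hlap : euclLap u x
      = -(2 * B * (1 - γ) * (n:ℝ) * (⟪x, x⟫:ℝ) ^ (1 - γ - 1))
        - 4 * B * (1 - γ) * (1 - γ - 1) * ((⟪x, x⟫:ℝ) ^ (1 - γ - 1 - 1) * (⟪x, x⟫:ℝ)) := by
    unfold euclLap
    rw [Finset.sum_congr rfl (fun i _ => hsecond i), Finset.sum_sub_distrib,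
      Finset.sum_const, Finset.card_univ, Fintype.card_fin, ← Finset.mul_sum, ← hsum]
    ring
  -- rpow identities
  have hE1 : (⟪x, x⟫:ℝ) ^ (1 - γ - 1 - 1) * (⟪x, x⟫:ℝ) = (⟪x, x⟫:ℝ) ^ (1 - γ - 1) := by
    nth_rewrite 2 [← Real.rpow_one (⟪x, x⟫:ℝ)]
    rw [← Real.rpow_add hS]
    congr 1
    ring
  have hE2 : (⟪x, x⟫:ℝ) ^ γ * (⟪x, x⟫:ℝ) ^ (1 - γ - 1) = 1 := by
    rw [← Real.rpow_add hS, show γ + (1 - γ - 1) = 0 by ring, Real.rpow_zero]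
  have hE3 : (⟪x, x⟫:ℝ) ^ γ * ((⟪x, x⟫:ℝ) ^ (1 - γ - 1) * (⟪x, x⟫:ℝ) ^ (1 - γ - 1)) * (⟪x, x⟫:ℝ)
      = (⟪x, x⟫:ℝ) ^ (1 - γ) := by
    nth_rewrite 4 [← Real.rpow_one (⟪x, x⟫:ℝ)]
    rw [← Real.rpow_add hS, ← Real.rpow_add hS, ← Real.rpow_add hS]
    congr 1
    ring
  have hnx : ‖x‖ ^ (2 * γ) = (⟪x, x⟫:ℝ) ^ γ := by
    rw [real_inner_self_eq_norm_sq x, ← Real.rpow_natCast ‖x‖ 2, ← Real.rpow_mul (norm_nonneg x)]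
    norm_num
  have hdx2 : d x ^ 2 = (⟪x, x⟫:ℝ) ^ (1 - γ) / (1 - γ) ^ 2 := by
    simp only [hd]
    rw [div_pow, sq_rpow ‖x‖ (norm_nonneg x), ← real_inner_self_eq_norm_sq]
  -- gradient of φ
  have hφ' : φ = fun y : EuclideanSpace ℝ (Fin n) => -(γ / 2) * Real.log ⟪y, y⟫ := by
    funext y
    simp only [hφ]
    rw [real_inner_self_eq_norm_sq, Real.log_pow]
    push_cast
    ring
  have hgφ : gradient φ x = (2 * (-(γ / 2) * (⟪x, x⟫:ℝ)⁻¹)) • x := by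
    rw [hφ']
    exact gradient_of_inner _ _ x ((Real.hasDerivAt_log hS.ne').const_mul (-(γ / 2)))
  -- gradient of f
  have hfev : f =ᶠ[nhds x] (fun y : EuclideanSpace ℝ (Fin n) =>
      -(α * (1 - γ) / 2) * Real.log ⟪y, y⟫ + α * Real.log (1 - γ)) := by
    filter_upwards [eventually_ne_nhds hx] with y hy
    have hny : 0 < ‖y‖ := norm_pos_iff.mpr hy
    simp only [hf, hd]
    rw [Real.log_div (by positivity) hne1γ, Real.log_rpow hny,
      real_inner_self_eq_norm_sq, Real.log_pow]
    push_cast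
    ring
  have hgf : gradient f x = (2 * (-(α * (1 - γ) / 2) * (⟪x, x⟫:ℝ)⁻¹)) • x := by
    rw [hfev.gradient_eq]
    exact gradient_of_inner _ _ x
      (((Real.hasDerivAt_log hS.ne').const_mul (-(α * (1 - γ) / 2))).add_const _)
  -- inner products
  have hip1 : (⟪gradient u x, gradient φ x⟫ : ℝ)
      = 2 * B * (1 - γ) * γ * (⟪x, x⟫:ℝ) ^ (1 - γ - 1) := by
    rw [hgu, hgφ, real_inner_smul_left, real_inner_smul_right]
    have hSS : (⟪x, x⟫:ℝ)⁻¹ * (⟪x, x⟫:ℝ) = 1 := inv_mul_cancel₀ hS.ne'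
    linear_combination (2 * B * (1 - γ) * γ * (⟪x, x⟫:ℝ) ^ (1 - γ - 1)) * hSS
  have hip2 : (⟪gradient f x, gradient u x⟫ : ℝ)
      = 2 * α * B * (1 - γ) ^ 2 * (⟪x, x⟫:ℝ) ^ (1 - γ - 1) := by
    rw [hgf, hgu, real_inner_smul_left, real_inner_smul_right]
    have hSS : (⟪x, x⟫:ℝ)⁻¹ * (⟪x, x⟫:ℝ) = 1 := inv_mul_cancel₀ hS.ne'
    linear_combination (2 * α * B * (1 - γ) ^ 2 * (⟪x, x⟫:ℝ) ^ (1 - γ - 1)) * hSS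
  have hnrm : ‖gradient u x‖ ^ 2
      = (2 * B * (1 - γ)) ^ 2 * ((⟪x, x⟫:ℝ) ^ (1 - γ - 1) * (⟪x, x⟫:ℝ) ^ (1 - γ - 1))
        * (⟪x, x⟫:ℝ) := by
    rw [hgu, norm_smul, mul_pow, Real.norm_eq_abs, sq_abs, ← real_inner_self_eq_norm_sq]
    ring
  refine ⟨fun _ => ?_, fun hdr => ?_, ?_⟩
  · -- the PDE
    rw [hnx, hlap, hE1, hip1, hip2]
    have hkey : (⟪x, x⟫:ℝ) ^ γ
          * (-(2 * B * (1 - γ) * (n:ℝ) * (⟪x, x⟫:ℝ) ^ (1 - γ - 1))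
              - 4 * B * (1 - γ) * (1 - γ - 1) * (⟪x, x⟫:ℝ) ^ (1 - γ - 1)
            + ((n:ℝ) - 2) * (2 * B * (1 - γ) * γ * (⟪x, x⟫:ℝ) ^ (1 - γ - 1)))
          - (⟪x, x⟫:ℝ) ^ γ * (2 * α * B * (1 - γ) ^ 2 * (⟪x, x⟫:ℝ) ^ (1 - γ - 1))
        = ((⟪x, x⟫:ℝ) ^ γ * (⟪x, x⟫:ℝ) ^ (1 - γ - 1))
          * (-(2 * B * (1 - γ) * (n:ℝ)) - 4 * B * (1 - γ) * (1 - γ - 1)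
            + ((n:ℝ) - 2) * (2 * B * (1 - γ) * γ) - 2 * α * B * (1 - γ) ^ 2) := by
      ring
    rw [hkey, hE2, one_mul]
    have hC : -(2 * B * (1 - γ) * (n:ℝ)) - 4 * B * (1 - γ) * (1 - γ - 1)
        + ((n:ℝ) - 2) * (2 * B * (1 - γ) * γ) - 2 * α * B * (1 - γ) ^ 2 = -1 := by
      rw [hBdef]
      field_simp
      ring
    exact hC
  · -- boundary value
    simp only [hu, hdr]
    norm_num
  · -- gradient norm
    rw [hnx, hnrm, hdx2]
    have h3 : (⟪x, x⟫:ℝ) ^ γ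
        * ((2 * B * (1 - γ)) ^ 2 * ((⟪x, x⟫:ℝ) ^ (1 - γ - 1) * (⟪x, x⟫:ℝ) ^ (1 - γ - 1))
          * (⟪x, x⟫:ℝ))
        = ((⟪x, x⟫:ℝ) ^ γ * ((⟪x, x⟫:ℝ) ^ (1 - γ - 1) * (⟪x, x⟫:ℝ) ^ (1 - γ - 1))
            * (⟪x, x⟫:ℝ)) * (2 * B * (1 - γ)) ^ 2 := by ring
    rw [h3, hE3]
    have hC : (2 * B * (1 - γ)) ^ 2 = 1 / (1 - γ) ^ 2 / ((n:ℝ) + α) ^ 2 := by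
      rw [hBdef]
      field_simp
    rw [hC]
    ring
end

section
/- Let V(x) = d_g(x,O)²/(2(n+α)) on ℝⁿ \ {0} with g = |x|^{−2γ}δ, γ < 1, n + α ≠ 0. Then the Riemannian Hessian of V with respect to g satisfies ∇²V = (1/(n+α)) g, and the weighted Laplacian satisfies Δ_f V = 1 where f = −α log d_g(x,O). -/
open RealInnerProductSpace

section Aux

variable {n : ℕ}

local notation "E" => EuclideanSpace ℝ (Fin n)

lemma hasFDerivAt_normSq (x : E) :
    HasFDerivAt (fun y : E => (‖y‖ ^ 2 : ℝ)) ((2 : ℝ) • innerSL ℝ x) x := by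
  have h := (hasFDerivAt_id (𝕜 := ℝ) x).inner ℝ (hasFDerivAt_id x)
  have heq : (fun y : E => ⟪y, y⟫) = fun y : E => (‖y‖ ^ 2 : ℝ) :=
    funext fun y => real_inner_self_eq_norm_sq y
  simp only [id_eq] at h
  rw [heq] at h
  refine h.congr_fderiv ?_
  ext v
  simp [fderivInnerCLM_apply, real_inner_comm, two_mul]

lemma hasFDerivAt_rpowNormSq (s c : ℝ) {y : E} (hy : y ≠ 0) :
    HasFDerivAt (fun z : E => c * ((‖z‖ ^ 2 : ℝ)) ^ s)
      ((2 * c * s * ((‖y‖ ^ 2 : ℝ)) ^ (s - 1)) • innerSL ℝ y) y := by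
  have hr : (0 : ℝ) < ‖y‖ ^ 2 := by
    have := norm_pos_iff.mpr hy
    positivity
  have h1 := ((hasFDerivAt_normSq y).rpow_const (p := s) (Or.inl hr.ne')).const_mul c
  refine h1.congr_fderiv ?_
  ext v
  simp
  ring

lemma gradient_rpowNormSq (s c : ℝ) {x : E} (hx : x ≠ 0) :
    gradient (fun z : E => c * ((‖z‖ ^ 2 : ℝ)) ^ s) x
      = (2 * c * s * ((‖x‖ ^ 2 : ℝ)) ^ (s - 1)) • x := by
  apply HasGradientAt.gradient
  rw [hasGradientAt_iff_hasFDerivAt]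
  refine (hasFDerivAt_rpowNormSq s c hx).congr_fderiv ?_
  ext v
  simp [InnerProductSpace.toDual_apply_apply, real_inner_smul_left]

lemma gradient_logNormSq (k : ℝ) {x : E} (hx : x ≠ 0) :
    gradient (fun z : E => k * Real.log ((‖z‖ ^ 2 : ℝ))) x
      = (2 * k / ((‖x‖ ^ 2 : ℝ))) • x := by
  have hr : (0 : ℝ) < ‖x‖ ^ 2 := by
    have := norm_pos_iff.mpr hx
    positivity
  have h := ((Real.hasDerivAt_log hr.ne').comp_hasFDerivAt x
    (hasFDerivAt_normSq x)).const_mul k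
  apply HasGradientAt.gradient
  rw [hasGradientAt_iff_hasFDerivAt]
  refine h.congr_fderiv ?_
  ext v
  simp [InnerProductSpace.toDual_apply_apply, real_inner_smul_left, Function.comp]
  ring

lemma gradient_logNormSq_add (k C : ℝ) {x : E} (hx : x ≠ 0) :
    gradient (fun z : E => k * Real.log ((‖z‖ ^ 2 : ℝ)) + C) x
      = (2 * k / ((‖x‖ ^ 2 : ℝ))) • x := by
  have hr : (0 : ℝ) < ‖x‖ ^ 2 := by
    have := norm_pos_iff.mpr hx
    positivity
  have h := (((Real.hasDerivAt_log hr.ne').comp_hasFDerivAt x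
    (hasFDerivAt_normSq x)).const_mul k).add_const C
  apply HasGradientAt.gradient
  rw [hasGradientAt_iff_hasFDerivAt]
  refine h.congr_fderiv ?_
  ext v
  simp [InnerProductSpace.toDual_apply_apply, real_inner_smul_left, Function.comp]
  ring

lemma second_rpowNormSq (s c : ℝ) {x : E} (hx : x ≠ 0) (i j : Fin n) :
    fderiv ℝ (fun y => fderiv ℝ (fun z : E => c * ((‖z‖ ^ 2 : ℝ)) ^ s) y
        (EuclideanSpace.single j 1)) x (EuclideanSpace.single i 1)
      = 4 * c * s * (s - 1) * ((‖x‖ ^ 2 : ℝ)) ^ (s - 2) * (x i * x j)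
        + 2 * c * s * ((‖x‖ ^ 2 : ℝ)) ^ (s - 1) * (if i = j then 1 else 0) := by
  have hr : (0 : ℝ) < ‖x‖ ^ 2 := by
    have := norm_pos_iff.mpr hx
    positivity
  have hev : (fun y : E => fderiv ℝ (fun z : E => c * ((‖z‖ ^ 2 : ℝ)) ^ s) y
        (EuclideanSpace.single j 1))
      =ᶠ[nhds x] fun y : E => (2 * c * s) * (((‖y‖ ^ 2 : ℝ)) ^ (s - 1) * y j) := by
    filter_upwards [isOpen_compl_singleton.mem_nhds hx] with y hy
    rw [(hasFDerivAt_rpowNormSq s c hy).fderiv]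
    simp [EuclideanSpace.inner_single_right]
    ring
  rw [hev.fderiv_eq]
  have hP : HasFDerivAt (fun y : E => ((‖y‖ ^ 2 : ℝ)) ^ (s - 1))
      (((s - 1) * ((‖x‖ ^ 2 : ℝ)) ^ (s - 1 - 1)) • ((2 : ℝ) • innerSL ℝ x)) x :=
    (hasFDerivAt_normSq x).rpow_const (p := s - 1) (Or.inl hr.ne')
  have hL : HasFDerivAt (fun y : E => y j) (EuclideanSpace.proj (𝕜 := ℝ) j) x :=
    (EuclideanSpace.proj (𝕜 := ℝ) j).hasFDerivAt
  have hprod := (hP.mul hL).const_mul (2 * c * s)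
  simp only [Pi.mul_apply] at hprod
  rw [hprod.fderiv]
  have hs : s - 1 - 1 = s - 2 := by ring
  rw [hs] at *
  simp [EuclideanSpace.inner_single_right, EuclideanSpace.single_apply, eq_comm (a := i)]
  ring_nf

end Aux

set_option maxHeartbeats 1000000 in
/-- For `V(x) = d_g(x,O)²/(2(n+α))` on `ℝⁿ \ {0}` with `g = |x|^{−2γ}δ = e^{2φ}δ`
(`φ = −γ log|x|`, `γ < 1`, `n + α ≠ 0`, `d_g(x,O) = |x|^{1−γ}/(1−γ)`), the Riemannian
Hessian `∇²V = D²V − (dV⊗dφ + dφ⊗dV) + (DV·Dφ)δ` equals `(1/(n+α)) g`, and the weighted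
Laplacian `Δ_f V = e^{−2φ}(ΔV + (n−2)DV·Dφ − Df·DV)` equals `1`, where
`f = −α log d_g(x,O)`. -/
theorem stmt11 (n : ℕ) (γ α : ℝ) (hγ : γ < 1) (hα : (n : ℝ) + α ≠ 0)
    (V f φ : EuclideanSpace ℝ (Fin n) → ℝ)
    (hV : V = fun y => (‖y‖ ^ (1 - γ) / (1 - γ)) ^ 2 / (2 * ((n : ℝ) + α)))
    (hf : f = fun y => -α * Real.log (‖y‖ ^ (1 - γ) / (1 - γ)))
    (hφ : φ = fun y => -γ * Real.log ‖y‖) :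
    ∀ x : EuclideanSpace ℝ (Fin n), x ≠ 0 →
      (∀ i j : Fin n,
        fderiv ℝ (fun y => fderiv ℝ V y (EuclideanSpace.single j 1)) x
            (EuclideanSpace.single i 1)
          - (gradient V x i * gradient φ x j + gradient φ x i * gradient V x j)
          + ⟪gradient V x, gradient φ x⟫ * (if i = j then (1:ℝ) else 0)
        = (1 / ((n : ℝ) + α)) * (‖x‖ ^ (-(2 * γ)) * (if i = j then (1:ℝ) else 0))) ∧
      ‖x‖ ^ (2 * γ) * (euclLap V x + ((n : ℝ) - 2) * ⟪gradient V x, gradient φ x⟫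
          - ⟪gradient f x, gradient V x⟫) = 1 := by
  intro x hx
  have hs : (0:ℝ) < 1 - γ := by linarith
  have hxn : (0:ℝ) < ‖x‖ := norm_pos_iff.mpr hx
  have hr : (0:ℝ) < ‖x‖ ^ 2 := by positivity
  -- canonical forms
  have hVeq : V = fun y => (1 / ((1 - γ)^2 * (2 * ((n : ℝ) + α)))) * ((‖y‖ ^ 2 : ℝ)) ^ (1 - γ) := by
    rw [hV]; funext y
    have h1 : ((‖y‖ ^ (1 - γ) : ℝ)) ^ (2:ℕ) = ‖y‖ ^ ((1 - γ) * 2) := by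
      rw [← Real.rpow_natCast (‖y‖ ^ (1 - γ)) 2, ← Real.rpow_mul (norm_nonneg y)]
      norm_num
    have h2 : ((‖y‖ ^ 2 : ℝ)) ^ (1 - γ) = ‖y‖ ^ ((1 - γ) * 2) := by
      rw [← Real.rpow_natCast ‖y‖ 2, ← Real.rpow_mul (norm_nonneg y)]
      ring_nf
    rw [div_pow, h1, h2]
    field_simp
  have hφeq : φ = fun y => (-γ / 2) * Real.log ((‖y‖ ^ 2 : ℝ)) := by
    rw [hφ]; funext y
    rw [Real.log_pow]
    push_cast
    ring
  have hfev : f =ᶠ[nhds x] fun y =>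
      (-(α * (1 - γ)) / 2) * Real.log ((‖y‖ ^ 2 : ℝ)) + α * Real.log (1 - γ) := by
    rw [hf]
    filter_upwards [isOpen_compl_singleton.mem_nhds hx] with y hy
    have hyn : (0:ℝ) < ‖y‖ := norm_pos_iff.mpr hy
    rw [Real.log_div (Real.rpow_pos_of_pos hyn _).ne' (by linarith), Real.log_rpow hyn,
      Real.log_pow]
    push_cast
    ring
  have hne : (1 - γ) ≠ 0 := hs.ne'
  set c : ℝ := 1 / ((1 - γ)^2 * (2 * ((n : ℝ) + α))) with hc
  set r : ℝ := ‖x‖ ^ 2 with hrdef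
  set P : ℝ := r ^ ((1 - γ) - 1) with hPdef
  have hPpos : (0:ℝ) < P := Real.rpow_pos_of_pos hr _
  have hB' : r ^ (-γ) = ‖x‖ ^ (-(2 * γ)) := by
    rw [show -(2*γ) = (2:ℝ) * (-γ) by ring, Real.rpow_mul (norm_nonneg x), Real.rpow_two]
  have hB : ‖x‖ ^ (-(2 * γ)) = P := by
    rw [← hB', hPdef, show (1-γ)-1 = -γ by ring]
  have hA : r ^ ((1 - γ) - 2) = P / r := by
    rw [hPdef, show (1-γ)-2 = ((1-γ)-1) - 1 by ring, Real.rpow_sub_one hr.ne']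
  have hC : ‖x‖ ^ (2 * γ) * P = 1 := by
    rw [hPdef, show (1-γ)-1 = -γ by ring, hB', ← Real.rpow_add hxn]
    norm_num
  have hT : ‖x‖ ^ (2 * γ) = P⁻¹ :=
    eq_inv_of_mul_eq_one_left hC
  -- gradients
  have hgV : gradient V x = (2 * c * (1 - γ) * P) • x := by
    rw [hVeq]; exact gradient_rpowNormSq _ _ hx
  have hgφ : gradient φ x = (2 * (-γ / 2) / r) • x := by
    rw [hφeq]; exact gradient_logNormSq _ hx
  have hgf : gradient f x = (2 * (-(α * (1 - γ)) / 2) / r) • x := by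
    rw [hfev.gradient_eq]; exact gradient_logNormSq_add _ _ hx
  have hinner : ∀ a b : ℝ, ⟪a • x, b • x⟫ = a * b * r := by
    intro a b
    rw [real_inner_smul_left, real_inner_smul_right, real_inner_self_eq_norm_sq]
    ring
  have hcoord : ∀ (a : ℝ) (i : Fin n), (a • x) i = a * x i := fun a i => rfl
  constructor
  · intro i j
    rw [hgV, hgφ, hinner, hVeq, second_rpowNormSq _ _ hx i j, hB,
      hcoord, hcoord, hcoord, hcoord, ← hrdef, hA, ← hPdef, hc]
    rcases eq_or_ne i j with hij | hij
    · subst hij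
      field_simp
      ring
    · simp only [if_neg hij]
      field_simp
      ring
  · have hsum : ∑ i, x i * x i = r := by
      rw [hrdef, ← real_inner_self_eq_norm_sq x, PiLp.inner_apply]
      simp [RCLike.inner_apply, sq]
    have hlap : euclLap V x = 4 * c * (1-γ) * ((1-γ) - 1) * (P / r) * r
        + (n : ℝ) * (2 * c * (1-γ) * P) := by
      simp only [euclLap]
      rw [hVeq, Finset.sum_congr rfl fun i _ => second_rpowNormSq (1-γ) c hx i i]
      simp only [eq_self_iff_true, if_true, mul_one]
      rw [Finset.sum_add_distrib, ← Finset.mul_sum, hsum, Finset.sum_const,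
        Finset.card_univ, Fintype.card_fin, nsmul_eq_mul, ← hrdef, hA, ← hPdef]
    rw [hlap, hgV, hgφ, hgf, hinner, hinner, hT, hc]
    field_simp [hr.ne', hne, hα, hPpos.ne']
    ring
end

section
/- Let n ≥ 2, 0 < a < b, and set r(x) = |x| on the annulus Ω = {x ∈ ℝⁿ : a < |x| < b}. The function u(x) = ½ (r(x) − a)(b − r(x)) satisfies u'' + ((n−1)/r + w'/w) u' = −1 in the radial variable, where w(r) = r^{1−n}; moreover u(a) = u(b) = 0 and u'(b) = −u'(a) = −(b−a)/2. -/
open Set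

private lemma derivU (a b : ℝ) :
    deriv (fun r => (r - a) * (b - r) / 2) = fun r : ℝ => (a + b) / 2 - r := by
  ext r
  have h : HasDerivAt (fun r : ℝ => (r - a) * (b - r) / 2) ((a + b) / 2 - r) r := by
    have h1 : HasDerivAt (fun r : ℝ => (r - a) * (b - r))
        (1 * (b - r) + (r - a) * (0 - 1)) r :=
      (((hasDerivAt_id r).sub_const a).mul ((hasDerivAt_const r b).sub (hasDerivAt_id r)))
    have := h1.div_const 2
    rw [show (a + b) / 2 - r = (1 * (b - r) + (r - a) * (0 - 1)) / 2 by ring]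
    exact this
  exact h.deriv

/-- On the annulus `{a < r < b}` (`0 < a < b`, `n ≥ 2`), the radial function
`u = ½(r−a)(b−r)` satisfies `u'' + ((n−1)/r + w'/w) u' = −1` with the weight
`w(r) = r^{1−n}`, together with `u(a) = u(b) = 0` and `u'(b) = −u'(a) = −(b−a)/2`. -/
theorem stmt18 (n : ℕ) (hn : 2 ≤ n) (a b : ℝ) (ha : 0 < a) (hab : a < b)
    (U w : ℝ → ℝ)
    (hU : U = fun r => (r - a) * (b - r) / 2)
    (hw : w = fun r => r ^ ((1 : ℝ) - (n : ℝ))) :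
    (∀ r ∈ Ioo a b,
      deriv (deriv U) r + (((n : ℝ) - 1) / r + deriv w r / w r) * deriv U r = -1) ∧
    U a = 0 ∧ U b = 0 ∧
    deriv U b = -((b - a) / 2) ∧ deriv U a = (b - a) / 2 := by
  subst hU hw
  have hd1 : deriv (fun r => (r - a) * (b - r) / 2) = fun r : ℝ => (a + b) / 2 - r :=
    derivU a b
  have hd2 : ∀ r : ℝ, deriv (fun r : ℝ => (a + b) / 2 - r) r = -1 := by
    intro r
    have h : HasDerivAt (fun r : ℝ => (a + b) / 2 - r) (0 - 1) r :=
      (hasDerivAt_const r ((a + b) / 2)).sub (hasDerivAt_id r)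
    simpa using h.deriv
  refine ⟨?_, by simp, by simp, by rw [hd1]; ring, by rw [hd1]; ring⟩
  intro r hr
  have hr0 : (0 : ℝ) < r := lt_trans ha hr.1
  have hrne : r ≠ 0 := ne_of_gt hr0
  have hwderiv : deriv (fun r : ℝ => r ^ ((1 : ℝ) - (n : ℝ))) r
      = ((1 : ℝ) - (n : ℝ)) * r ^ ((1 : ℝ) - (n : ℝ) - 1) :=
    (Real.hasDerivAt_rpow_const (p := (1 : ℝ) - (n : ℝ)) (Or.inl hrne)).deriv
  have hratio : deriv (fun r : ℝ => r ^ ((1 : ℝ) - (n : ℝ))) r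
      / r ^ ((1 : ℝ) - (n : ℝ)) = ((1 : ℝ) - (n : ℝ)) / r := by
    rw [hwderiv, Real.rpow_sub hr0, Real.rpow_one]
    have hne : r ^ ((1 : ℝ) - (n : ℝ)) ≠ 0 := (Real.rpow_pos_of_pos hr0 _).ne'
    field_simp
  rw [hd1, hd2, hratio]
  have : ((n : ℝ) - 1) / r + ((1 : ℝ) - (n : ℝ)) / r = 0 := by
    field_simp
    ring
  rw [this]
  ring
end

section
/- Let n ≥ 1, β ∈ ℝ \ {−1, 1}, and 0 < a < b. The compatibility condition (1/b^β + 1/a^β) ∫_a^b r^{−β} (∫_a^r s^β ds) dr = (1/b^β) (∫_a^b r^{−β} dr)(∫_a^b s^β ds) holds if and only if (ρ^{1−β} − 1)/(1−β) = (ρ−1)(ρ^{−β} + 1)/2, where ρ = b/a. -/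
open intervalIntegral

lemma intR {a b : ℝ} (β : ℝ) (hβ : β ≠ -1) (ha : 0 < a) (hb : 0 < b) :
    ∫ s in a..b, s ^ β = (b ^ (β + 1) - a ^ (β + 1)) / (β + 1) :=
  integral_rpow (Or.inr ⟨hβ, Set.notMem_uIcc_of_lt ha hb⟩)

/-- For `0 < a < b` and `β ∉ {−1,1}`, the compatibility condition
`(1/b^β + 1/a^β) ∫_a^b r^{−β} (∫_a^r s^β ds) dr = (1/b^β)(∫_a^b r^{−β} dr)(∫_a^b s^β ds)`
holds if and only if `(ρ^{1−β} − 1)/(1−β) = (ρ−1)(ρ^{−β} + 1)/2`, where `ρ = b/a`. -/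
theorem stmt19 (n : ℕ) (hn : 1 ≤ n) (β a b : ℝ)
    (hβ1 : β ≠ -1) (hβ2 : β ≠ 1) (ha : 0 < a) (hab : a < b) :
    ((1 / b ^ β + 1 / a ^ β) *
        ∫ r in a..b, r ^ (-β) * ∫ s in a..r, s ^ β)
      = (1 / b ^ β) * (∫ r in a..b, r ^ (-β)) * (∫ s in a..b, s ^ β)
    ↔ ((b / a) ^ (1 - β) - 1) / (1 - β) = (b / a - 1) * ((b / a) ^ (-β) + 1) / 2 := by
  have hb : 0 < b := ha.trans hab
  have hβ1' : -β ≠ -1 := fun h => hβ2 (by linarith [neg_injective h])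
  have hA : (0:ℝ) < a ^ β := Real.rpow_pos_of_pos ha β
  have hB : (0:ℝ) < b ^ β := Real.rpow_pos_of_pos hb β
  have hβp : β + 1 ≠ 0 := fun h => hβ1 (by linarith)
  have hβm : 1 - β ≠ 0 := fun h => hβ2 (by linarith)
  have hβm' : -β + 1 ≠ 0 := fun h => hβ2 (by linarith)
  -- rewrite inner integral
  have key : (∫ r in a..b, r ^ (-β) * ∫ s in a..r, s ^ β)
      = ∫ r in a..b, (r ^ (1:ℝ) - a ^ (β + 1) * r ^ (-β)) / (β + 1) := by
    apply integral_congr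
    intro r hr
    rw [Set.uIcc_of_le hab.le] at hr
    have hr0 : 0 < r := lt_of_lt_of_le ha hr.1
    simp only []
    rw [intR β hβ1 ha hr0]
    rw [mul_div_assoc', mul_sub, ← Real.rpow_add hr0]
    ring_nf
  have i1 : IntervalIntegrable (fun r : ℝ => r ^ (1:ℝ)) MeasureTheory.volume a b :=
    intervalIntegrable_rpow' (by norm_num)
  have i2 : IntervalIntegrable (fun r : ℝ => a ^ (β + 1) * r ^ (-β))
      MeasureTheory.volume a b :=
    (intervalIntegrable_rpow (Or.inr (Set.notMem_uIcc_of_lt ha hb))).const_mul _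
  rw [key, integral_div, integral_sub i1 i2, integral_const_mul,
    intR 1 (by norm_num) ha hb, intR (-β) hβ1' ha hb, intR β hβ1 ha hb]
  -- rpow simplifications
  have e1 : ∀ x : ℝ, 0 < x → x ^ ((1:ℝ) + 1) = x * x := fun x hx => by
    rw [Real.rpow_add hx, Real.rpow_one]
  have e2 : ∀ x : ℝ, 0 < x → x ^ (β + 1) = x ^ β * x := fun x hx => by
    rw [Real.rpow_add hx, Real.rpow_one]
  have e3 : ∀ x : ℝ, 0 < x → x ^ (-β + 1) = (x ^ β)⁻¹ * x := fun x hx => by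
    rw [Real.rpow_add hx, Real.rpow_one, Real.rpow_neg hx.le]
  have e4 : (b / a) ^ (1 - β) = (b * a ^ β) / (a * b ^ β) := by
    rw [Real.div_rpow hb.le ha.le, Real.rpow_sub hb, Real.rpow_sub ha,
      Real.rpow_one, Real.rpow_one]
    field_simp
  have e5 : (b / a) ^ (-β) = a ^ β / b ^ β := by
    rw [Real.rpow_neg (div_pos hb ha).le, Real.div_rpow hb.le ha.le, inv_div]
  rw [e1 a ha, e1 b hb, e2 a ha, e2 b hb, e3 a ha, e3 b hb, e4, e5]
  -- now pure algebra
  rw [← sub_eq_zero, ← sub_eq_zero (b := (b / a - 1) * (a ^ β / b ^ β + 1) / 2)]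
  have factor :
      (1 / b ^ β + 1 / a ^ β) *
          (((b * b - a * a) / (1 + 1) -
              a ^ β * a * (((b ^ β)⁻¹ * b - (a ^ β)⁻¹ * a) / (-β + 1))) / (β + 1)) -
        1 / b ^ β * (((b ^ β)⁻¹ * b - (a ^ β)⁻¹ * a) / (-β + 1)) *
          ((b ^ β * b - a ^ β * a) / (β + 1))
      = (-(a * (a + b)) / (a ^ β * (β + 1))) *
        ((b * a ^ β / (a * b ^ β) - 1) / (1 - β) -
          (b / a - 1) * (a ^ β / b ^ β + 1) / 2) := by
    field_simp
    ring
  rw [factor, mul_eq_zero]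
  have hk : -(a * (a + b)) / (a ^ β * (β + 1)) ≠ 0 := by
    apply div_ne_zero
    · simp only [neg_ne_zero]
      exact mul_ne_zero ha.ne' (by positivity)
    · exact mul_ne_zero hA.ne' hβp
  simp [hk]
end
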